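/- Let S be a finite set and let f be a non-decreasing submodular real-valued set function on subsets of S. If X_k is the set of size k produced by the greedy algorithm (repeatedly adding an element of S maximizing f of the augmented set), then for every k ≥ 1, f(X_k) − f(∅) ≥ (1 − 1/e) · (f*_k − f(∅)), where f*_k = max{f(A) : A ⊆ S, |A| ≤ k}; in particular the greedy solution has efficiency greater than 63.2% for every k. -/

import Mathlib

/-- **(1 − 1/e)-efficiency of the greedy algorithm for non-decreasing submodular
set functions.**  If `X k` is the size-`k` set produced by the greedy algorithm on
a non-decreasing submodular set function `f` over the finite set `S`, and `fstar`
is the maximum of `f` over subsets of `S` with at most `k` elements, then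
`f (X k) − f ∅ ≥ (1 − 1/e) (fstar − f ∅)`; in particular the efficiency factor
`1 − 1/e` exceeds `63.2%`. -/
theorem greedy_submodular_efficiency
    {α : Type*} [DecidableEq α] (S : Finset α) (f : Finset α → ℝ)
    (hmono : ∀ A : Finset α, A ⊆ S → ∀ x ∈ S, f A ≤ f (insert x A))
    (hsub : ∀ A B : Finset α, A ⊆ B → B ⊆ S → ∀ x ∈ S, x ∉ B →
      f (insert x B) - f B ≤ f (insert x A) - f A)
    (X : ℕ → Finset α) (hX0 : X 0 = ∅)
    (hgreedy : ∀ j : ℕ, ∃ x ∈ S, X (j + 1) = insert x (X j) ∧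
      ∀ y ∈ S, f (insert y (X j)) ≤ f (insert x (X j)))
    (k : ℕ) (hk1 : 1 ≤ k) (hcard : (X k).card = k)
    (fstar : ℝ)
    (hfstar : IsGreatest {v : ℝ | ∃ A : Finset α, A ⊆ S ∧ A.card ≤ k ∧ f A = v} fstar) :
    (1 - 1 / Real.exp 1) * (fstar - f (∅ : Finset α)) ≤ f (X k) - f (∅ : Finset α) ∧
      (0.632 : ℝ) < 1 - 1 / Real.exp 1 := by
  have hk0 : (0:ℝ) < (k:ℝ) := by exact_mod_cast Nat.lt_of_lt_of_le Nat.zero_lt_one hk1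
  constructor
  · obtain ⟨⟨Astar, hAS, hAcard, hAval⟩, hub⟩ := hfstar
    -- X j ⊆ S for all j
    have hXsub : ∀ j, X j ⊆ S := by
      intro j; induction j with
      | zero => simp [hX0]
      | succ n ih =>
        obtain ⟨x, hx, hXe, _⟩ := hgreedy n
        rw [hXe]; exact Finset.insert_subset hx ih
    -- monotonicity over unions
    have monoset : ∀ (T B : Finset α), B ⊆ S → T ⊆ S → f B ≤ f (B ∪ T) := by
      intro T
      induction T using Finset.induction_on with
      | empty => intro B _ _; simp
      | insert _ _ ha ih =>
        rename_i a T
        intro B hB hT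
        have h1 : f B ≤ f (B ∪ T) := ih B hB (fun y hy => hT (Finset.mem_insert_of_mem hy))
        have h2 : f (B ∪ T) ≤ f (insert a (B ∪ T)) :=
          hmono (B ∪ T) (Finset.union_subset hB
            (fun y hy => hT (Finset.mem_insert_of_mem hy))) a (hT (Finset.mem_insert_self a T))
        rw [Finset.union_insert]
        linarith
    -- telescoping with submodularity
    have tele : ∀ (T B : Finset α), B ⊆ S → T ⊆ S → Disjoint T B →
        f (B ∪ T) - f B ≤ ∑ a ∈ T, (f (insert a B) - f B) := by
      intro T
      induction T using Finset.induction_on with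
      | empty => intro B _ _ _; simp
      | insert _ _ ha ih =>
        rename_i a T
        intro B hB hT hdisj
        have hTS : T ⊆ S := fun y hy => hT (Finset.mem_insert_of_mem hy)
        have haS : a ∈ S := hT (Finset.mem_insert_self a T)
        have hdisjT : Disjoint T B :=
          Finset.disjoint_of_subset_left (Finset.subset_insert a T) hdisj
        have haB : a ∉ B := by
          have := Finset.disjoint_left.mp hdisj (Finset.mem_insert_self a T)
          exact this
        have haBT : a ∉ B ∪ T := by
          simp [haB, ha]
        have hsubm : f (insert a (B ∪ T)) - f (B ∪ T) ≤ f (insert a B) - f B :=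
          hsub B (B ∪ T) Finset.subset_union_left (Finset.union_subset hB hTS) a haS haBT
        have hih := ih B hB hTS hdisjT
        rw [Finset.union_insert, Finset.sum_insert ha]
        linarith
    -- key per-step inequality
    have key : ∀ j, fstar - f (X j) ≤ (k:ℝ) * (f (X (j+1)) - f (X j)) := by
      intro j
      obtain ⟨x, hx, hXe, hmax⟩ := hgreedy j
      set T := Astar \ X j with hT
      have hTS : T ⊆ S := fun y hy => hAS (Finset.mem_sdiff.mp hy).1
      have hg0 : 0 ≤ f (X (j+1)) - f (X j) := by
        have := hmono (X j) (hXsub j) x hx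
        rw [hXe]; linarith
      have h1 : fstar ≤ f (X j ∪ T) := by
        have hm := monoset (X j) Astar hAS (hXsub j)
        have he : X j ∪ T = Astar ∪ X j := by
          rw [hT, Finset.union_comm, Finset.sdiff_union_self_eq_union]
        rw [he, ← hAval]; exact hm
      have h2 := tele T (X j) (hXsub j) hTS Finset.sdiff_disjoint
      have h3 : ∑ a ∈ T, (f (insert a (X j)) - f (X j)) ≤
          (T.card : ℝ) * (f (X (j+1)) - f (X j)) := by
        rw [← nsmul_eq_mul]
        apply Finset.sum_le_card_nsmul
        intro a haT
        have := hmax a (hTS haT)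
        rw [hXe]; linarith
      have h4 : (T.card : ℝ) ≤ (k:ℝ) := by
        have : T.card ≤ Astar.card := Finset.card_le_card (Finset.sdiff_subset)
        exact_mod_cast le_trans this hAcard
      have h5 : (T.card : ℝ) * (f (X (j+1)) - f (X j)) ≤ (k:ℝ) * (f (X (j+1)) - f (X j)) :=
        mul_le_mul_of_nonneg_right h4 hg0
      linarith
    set c : ℝ := 1 - 1/(k:ℝ) with hc
    have hc0 : 0 ≤ c := by
      rw [hc, sub_nonneg, div_le_one hk0]; exact_mod_cast hk1
    have hrec : ∀ j, fstar - f (X (j+1)) ≤ c * (fstar - f (X j)) := by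
      intro j
      have hkey := key j
      have hh : (k:ℝ) * (fstar - f (X (j+1))) ≤ ((k:ℝ) - 1) * (fstar - f (X j)) := by
        nlinarith
      have hck : c * (fstar - f (X j)) = (((k:ℝ)-1) * (fstar - f (X j)))/(k:ℝ) := by
        rw [hc]; field_simp
      rw [hck, le_div_iff₀ hk0]
      nlinarith
    have hiter : ∀ j, fstar - f (X j) ≤ c ^ j * (fstar - f (X 0)) := by
      intro j; induction j with
      | zero => simp
      | succ n ih =>
        calc fstar - f (X (n+1)) ≤ c * (fstar - f (X n)) := hrec n
          _ ≤ c * (c ^ n * (fstar - f (X 0))) := mul_le_mul_of_nonneg_left ih hc0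
          _ = c ^ (n+1) * (fstar - f (X 0)) := by ring
    have hd0 : 0 ≤ fstar - f (X 0) := by
      rw [hX0]
      have : f (∅ : Finset α) ∈ {v : ℝ | ∃ A : Finset α, A ⊆ S ∧ A.card ≤ k ∧ f A = v} :=
        ⟨∅, Finset.empty_subset S, by simp [Nat.zero_le], rfl⟩
      have := hub this
      linarith
    have hck : c ^ k ≤ Real.exp (-1) := by
      have h1 : c ≤ Real.exp (-(1/(k:ℝ))) := by
        have := Real.add_one_le_exp (-(1/(k:ℝ)))
        linarith
      calc c ^ k ≤ (Real.exp (-(1/(k:ℝ)))) ^ k := pow_le_pow_left₀ hc0 h1 k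
        _ = Real.exp ((k:ℝ) * (-(1/(k:ℝ)))) := (Real.exp_nat_mul _ k).symm
        _ = Real.exp (-1) := by
            congr 1; field_simp
    have hfinal : fstar - f (X k) ≤ Real.exp (-1) * (fstar - f (X 0)) := by
      calc fstar - f (X k) ≤ c ^ k * (fstar - f (X 0)) := hiter k
        _ ≤ Real.exp (-1) * (fstar - f (X 0)) := mul_le_mul_of_nonneg_right hck hd0
    rw [hX0] at hfinal hd0
    have hexp : Real.exp (-1) = 1 / Real.exp 1 := by
      rw [Real.exp_neg]; rw [inv_eq_one_div]
    rw [hexp] at hfinal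
    nlinarith [hfinal]
  · have h := Real.exp_one_gt_d9
    have hex : (0:ℝ) < Real.exp 1 := Real.exp_pos 1
    have h368 : 1/Real.exp 1 < 0.368 := by
      rw [div_lt_iff₀ hex]; nlinarith
    linarith
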